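/- For all λ > 0, μ > 0, every integer k ≥ 1 and every t ≥ 0, the distribution function of the first-hitting time of state k for the iterated Poisson process satisfies ∫_0^t h(τ) dτ = (μ^k/k!) · [ e^{-λ(1-e^{-μ})t} B_k(λ e^{-μ} t) + Σ_{j=0}^k S_2(k,j) γ(j+1, λ(1-e^{-μ})t)/(e^{μ}-1)^j ], where γ(a,z) = ∫_0^z τ^{a-1} e^{-τ} dτ is the lower incomplete gamma function. -/

import Mathlib

open scoped BigOperators
open Filter MeasureTheory

/-- Bell polynomial: `B n x = e^{-x} * Σ_{k=0}^∞ k^n x^k / k!` (n-th moment of Poisson(x)). -/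
noncomputable def bell (n : ℕ) (x : ℝ) : ℝ :=
  Real.exp (-x) * ∑' k : ℕ, (k : ℝ) ^ n * x ^ k / (Nat.factorial k : ℝ)

/-- Stirling numbers of the second kind:
`S2 n k = (1/k!) Σ_{i=0}^k (-1)^i C(k,i) (k-i)^n`. -/
noncomputable def S2 (n k : ℕ) : ℝ :=
  (1 / (Nat.factorial k : ℝ)) * ∑ i ∈ Finset.range (k + 1),
    (-1 : ℝ) ^ i * (Nat.choose k i : ℝ) * ((k - i : ℕ) : ℝ) ^ n

/-- unnormalized Stirling sum -/
noncomputable def T (n j : ℕ) : ℝ :=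
  ∑ i ∈ Finset.range (j + 1), (-1 : ℝ) ^ i * (Nat.choose j i : ℝ) * ((j - i : ℕ) : ℝ) ^ n

lemma S2_eq_T (n j : ℕ) : S2 n j = T n j / (Nat.factorial j : ℝ) := by
  rw [S2, T, one_div, div_eq_mul_inv, mul_comm]

lemma T_rec (n j : ℕ) : T (n + 1) (j + 1) = (j + 1 : ℝ) * T n (j + 1) + (j + 1 : ℝ) * T n j := by
  have h2 : ∀ i ∈ Finset.range (j + 2), ((j + 1 - i : ℕ) : ℝ) = (j + 1 : ℝ) - i := by
    intro i hi
    rw [Finset.mem_range] at hi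
    push_cast [Nat.cast_sub (by omega : i ≤ j + 1)]
    ring
  have h3 : T (n + 1) (j + 1) - (j + 1 : ℝ) * T n (j + 1)
      = ∑ i ∈ Finset.range (j + 2),
          (-1 : ℝ) ^ i * (Nat.choose (j+1) i : ℝ) * (((j + 1 - i : ℕ) : ℝ)) ^ n * (-(i : ℝ)) := by
    rw [T, T, Finset.mul_sum, ← Finset.sum_sub_distrib]
    apply Finset.sum_congr rfl
    intro i hi
    rw [pow_succ, h2 i hi]
    ring
  have h4 : ∀ m, (-1 : ℝ) ^ (m+1) * (Nat.choose (j+1) (m+1) : ℝ) * (((j + 1 - (m+1) : ℕ) : ℝ)) ^ n * (-((m+1 : ℕ) : ℝ))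
      = (j + 1 : ℝ) * ((-1 : ℝ) ^ m * (Nat.choose j m : ℝ) * (((j - m : ℕ) : ℝ)) ^ n) := by
    intro m
    have hc : ((m : ℝ) + 1) * (Nat.choose (j+1) (m+1) : ℝ) = ((j : ℝ) + 1) * (Nat.choose j m : ℝ) := by
      have h := congrArg (Nat.cast (R := ℝ)) (Nat.add_one_mul_choose_eq j m)
      push_cast at h
      linarith
    have hsub : (j + 1 - (m+1) : ℕ) = (j - m : ℕ) := by omega
    rw [hsub, pow_succ]
    push_cast
    linear_combination ((-1:ℝ)^m * ((j - m : ℕ) : ℝ)^n) * hc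
  have h5 : T (n + 1) (j + 1) - (j + 1 : ℝ) * T n (j + 1) = (j + 1 : ℝ) * T n j := by
    rw [h3, Finset.sum_range_succ', T, Finset.mul_sum]
    simp only [Nat.cast_zero, neg_zero, mul_zero, add_zero]
    exact Finset.sum_congr rfl fun m _ => h4 m
  linarith

lemma T_zero_of_lt : ∀ n j : ℕ, n < j → T n j = 0 := by
  intro n
  induction n with
  | zero =>
    intro j hj
    obtain ⟨j', rfl⟩ : ∃ j', j = j' + 1 := ⟨j - 1, by omega⟩
    have h := Int.alternating_sum_range_choose_of_ne (n := j' + 1) (by omega)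
    have h2 : T 0 (j' + 1) = ((∑ i ∈ Finset.range (j' + 1 + 1), (-1 : ℤ) ^ i * (Nat.choose (j'+1) i) : ℤ) : ℝ) := by
      rw [T]; push_cast
      refine Finset.sum_congr rfl fun i _ => ?_
      rw [pow_zero]; ring
    rw [h2, h]; simp
  | succ n ih =>
    intro j hj
    obtain ⟨j', rfl⟩ : ∃ j', j = j' + 1 := ⟨j - 1, by omega⟩
    rw [T_rec, ih _ (by omega), ih _ (by omega)]; ring

lemma S2_zero_of_lt {n j : ℕ} (h : n < j) : S2 n j = 0 := by
  rw [S2_eq_T, T_zero_of_lt n j h, zero_div]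

lemma S2_succ_zero (n : ℕ) : S2 (n + 1) 0 = 0 := by
  simp [S2]

lemma S2_rec (n j : ℕ) : S2 (n + 1) (j + 1) = ((j : ℝ) + 1) * S2 n (j + 1) + S2 n j := by
  have hj : (Nat.factorial j : ℝ) ≠ 0 := by exact_mod_cast (Nat.factorial_pos j).ne'
  have hj1 : (Nat.factorial (j + 1) : ℝ) ≠ 0 := by exact_mod_cast (Nat.factorial_pos (j+1)).ne'
  rw [S2_eq_T, S2_eq_T, S2_eq_T, T_rec, Nat.factorial_succ]
  push_cast
  field_simp

lemma key (n k : ℕ) : ((k : ℝ)) ^ n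
    = ∑ j ∈ Finset.range (n + 1), S2 n j * (Nat.descFactorial k j : ℝ) := by
  induction n with
  | zero => simp [S2]
  | succ n ih =>
    have hd : ∀ j : ℕ, (k : ℝ) * (Nat.descFactorial k j : ℝ)
        = (Nat.descFactorial k (j + 1) : ℝ) + (j : ℝ) * (Nat.descFactorial k j : ℝ) := by
      intro j
      rcases le_or_gt j k with h | h
      · rw [Nat.descFactorial_succ, Nat.cast_mul, Nat.cast_sub h]; ring
      · have h0 : Nat.descFactorial k j = 0 := Nat.descFactorial_eq_zero_iff_lt.2 h
        rw [Nat.descFactorial_succ, h0]; simp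
    have step1 : ((k : ℝ)) ^ (n + 1)
        = ∑ j ∈ Finset.range (n + 1), S2 n j * (Nat.descFactorial k (j + 1) : ℝ)
          + ∑ j ∈ Finset.range (n + 1), (j : ℝ) * S2 n j * (Nat.descFactorial k j : ℝ) := by
      rw [pow_succ, ih, Finset.sum_mul, ← Finset.sum_add_distrib]
      refine Finset.sum_congr rfl fun j _ => ?_
      linear_combination S2 n j * hd j
    have step2 : ∑ j ∈ Finset.range (n + 1), (j : ℝ) * S2 n j * (Nat.descFactorial k j : ℝ)
        = ∑ m ∈ Finset.range n, ((m : ℝ) + 1) * S2 n (m + 1) * (Nat.descFactorial k (m + 1) : ℝ) := by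
      rw [Finset.sum_range_succ']
      push_cast
      simp
    rw [Finset.sum_range_succ' (fun j => S2 (n + 1) j * (Nat.descFactorial k j : ℝ)) (n + 1)]
    simp only [S2_succ_zero, zero_mul, add_zero, S2_rec]
    rw [step1, step2]
    have expand : ∑ m ∈ Finset.range (n + 1),
        (((m : ℝ) + 1) * S2 n (m + 1) + S2 n m) * (Nat.descFactorial k (m + 1) : ℝ)
        = ∑ m ∈ Finset.range (n + 1), ((m : ℝ) + 1) * S2 n (m + 1) * (Nat.descFactorial k (m + 1) : ℝ)
          + ∑ m ∈ Finset.range (n + 1), S2 n m * (Nat.descFactorial k (m + 1) : ℝ) := by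
      rw [← Finset.sum_add_distrib]
      exact Finset.sum_congr rfl fun m _ => by ring
    rw [expand, Finset.sum_range_succ (fun m => ((m : ℝ) + 1) * S2 n (m + 1) * (Nat.descFactorial k (m + 1) : ℝ)) n]
    rw [S2_zero_of_lt (by omega : n < n + 1)]
    ring

lemma exp_tsum (x : ℝ) : Real.exp x = ∑' n : ℕ, x ^ n / (Nat.factorial n : ℝ) := by
  rw [Real.exp_eq_exp_ℝ, NormedSpace.exp_eq_tsum_div]

section desc
variable (j : ℕ) (x : ℝ)

private noncomputable def f (k : ℕ) : ℝ := (Nat.descFactorial k j : ℝ) * x ^ k / (Nat.factorial k : ℝ)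

lemma f_comp (m : ℕ) : f j x (m + j) = x ^ j * (x ^ m / (Nat.factorial m : ℝ)) := by
  have h := Nat.factorial_mul_descFactorial (Nat.le_add_left j m)
  rw [Nat.add_sub_cancel] at h
  have hm : (Nat.factorial m : ℝ) ≠ 0 := by exact_mod_cast (Nat.factorial_pos m).ne'
  have hmj : (Nat.factorial (m + j) : ℝ) ≠ 0 := by exact_mod_cast (Nat.factorial_pos (m+j)).ne'
  have hR : (Nat.factorial m : ℝ) * (Nat.descFactorial (m + j) j : ℝ) = (Nat.factorial (m + j) : ℝ) := by
    exact_mod_cast congrArg (Nat.cast (R := ℝ)) h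
  rw [f, pow_add]
  field_simp
  linear_combination x ^ m * x ^ j * hR

lemma f_supp : Function.support (f j x) ⊆ Set.range (· + j) := by
  intro k hk
  by_contra hr
  apply hk
  have hkj : k < j := by
    rcases le_or_gt j k with h | h
    · exact absurd ⟨k - j, by simpa using Nat.sub_add_cancel h⟩ hr
    · exact h
  rw [f, Nat.descFactorial_eq_zero_iff_lt.2 hkj]
  simp

lemma g_inj : Function.Injective (fun m : ℕ => m + j) := add_left_injective j

lemma f_summable : Summable (f j x) := by
  rw [← Function.Injective.summable_iff (g_inj j) (fun k hk => Function.notMem_support.mp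
    (fun hs => hk (f_supp j x hs)))]
  have : (f j x ∘ fun m => m + j) = fun m => x ^ j * (x ^ m / (Nat.factorial m : ℝ)) := by
    funext m; exact f_comp j x m
  rw [this]
  exact (Real.summable_pow_div_factorial x).mul_left _

lemma f_tsum : ∑' k : ℕ, f j x k = x ^ j * Real.exp x := by
  rw [← Function.Injective.tsum_eq (g_inj j) (f_supp j x)]
  calc ∑' m : ℕ, f j x (m + j) = ∑' m : ℕ, x ^ j * (x ^ m / (Nat.factorial m : ℝ)) :=
        tsum_congr (f_comp j x)
    _ = x ^ j * ∑' m : ℕ, x ^ m / (Nat.factorial m : ℝ) := tsum_mul_left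
    _ = x ^ j * Real.exp x := by rw [← exp_tsum]

end desc

lemma bell_eq (n : ℕ) (x : ℝ) : bell n x = ∑ j ∈ Finset.range (n + 1), S2 n j * x ^ j := by
  have h1 : ∀ k : ℕ, (k : ℝ) ^ n * x ^ k / (Nat.factorial k : ℝ)
      = ∑ j ∈ Finset.range (n + 1), S2 n j * f j x k := by
    intro k
    rw [key n k, Finset.sum_mul, Finset.sum_div]
    refine Finset.sum_congr rfl fun j _ => ?_
    rw [f]; ring
  rw [bell, tsum_congr h1,
    Summable.tsum_finsetSum (fun j _ => ((f_summable j x).mul_left (S2 n j)))]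
  have h2 : ∀ j ∈ Finset.range (n + 1), ∑' k : ℕ, S2 n j * f j x k = S2 n j * (x ^ j * Real.exp x) := by
    intro j _
    rw [tsum_mul_left, f_tsum]
  rw [Finset.sum_congr rfl h2, Finset.mul_sum]
  refine Finset.sum_congr rfl fun j _ => ?_
  rw [Real.exp_neg]
  field_simp

lemma bell_hasDerivAt (n : ℕ) (x : ℝ) :
    HasDerivAt (bell n) (∑ j ∈ Finset.range (n + 1), S2 n j * ((j : ℝ) * x ^ (j - 1))) x := by
  have hfun : bell n = fun y => ∑ j ∈ Finset.range (n + 1), S2 n j * y ^ j :=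
    funext (bell_eq n)
  rw [hfun]
  refine HasDerivAt.fun_sum fun j _ => ?_
  simpa using (hasDerivAt_pow j x).const_mul (S2 n j)

lemma bell_deriv (n : ℕ) (x : ℝ) :
    deriv (fun y => bell n y) x = ∑ j ∈ Finset.range (n + 1), S2 n j * ((j : ℝ) * x ^ (j - 1)) :=
  (bell_hasDerivAt n x).deriv

/-- First-hitting-time density of state `k` for the iterated Poisson process:
`h(t) = (e^{-μ}μ^k/k!) λ e^{-λ(1-e^{-μ})t} B_k'(λ e^{-μ} t)`. -/
noncomputable def hitDens (lam mu : ℝ) (k : ℕ) (t : ℝ) : ℝ :=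
  Real.exp (-mu) * mu ^ k / (Nat.factorial k : ℝ) * lam *
    Real.exp (-(lam * (1 - Real.exp (-mu))) * t) *
    deriv (fun x => bell k x) (lam * Real.exp (-mu) * t)

/-- Lower incomplete gamma function `γ(a,z) = ∫_0^z τ^{a-1} e^{-τ} dτ`. -/
noncomputable def gammaLower (a z : ℝ) : ℝ :=
  ∫ τ in (0 : ℝ)..z, τ ^ (a - 1) * Real.exp (-τ)

lemma gammaLower_nat (j : ℕ) (z : ℝ) :
    gammaLower ((j : ℝ) + 1) z = ∫ τ in (0 : ℝ)..z, τ ^ j * Real.exp (-τ) := by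
  rw [gammaLower]
  simp only [add_sub_cancel_right, Real.rpow_natCast]

lemma G_cont (j : ℕ) : Continuous fun τ : ℝ => τ ^ j * Real.exp (-τ) := by
  fun_prop

lemma G_hasDeriv (j : ℕ) (z : ℝ) :
    HasDerivAt (fun z => ∫ τ in (0 : ℝ)..z, τ ^ j * Real.exp (-τ)) (z ^ j * Real.exp (-z)) z :=
  intervalIntegral.integral_hasDerivAt_right ((G_cont j).intervalIntegrable _ _)
    ((G_cont j).stronglyMeasurableAtFilter _ _) (G_cont j).continuousAt

lemma hitDens_eq (lam mu : ℝ) (k : ℕ) (τ : ℝ) :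
    hitDens lam mu k τ = Real.exp (-mu) * mu ^ k / (Nat.factorial k : ℝ) * lam *
      Real.exp (-(lam * (1 - Real.exp (-mu))) * τ) *
      ∑ j ∈ Finset.range (k + 1),
        S2 k j * ((j : ℝ) * (lam * Real.exp (-mu) * τ) ^ (j - 1)) := by
  rw [hitDens, bell_deriv]

/-- distribution function of the first-hitting time of state `k`:
`∫_0^t h(τ) dτ = (μ^k/k!) [e^{-λ(1-e^{-μ})t} B_k(λe^{-μ}t)
  + Σ_{j=0}^k S2(k,j) γ(j+1, λ(1-e^{-μ})t)/(e^μ-1)^j]`. -/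
theorem stmt18 (lam mu : ℝ) (hlam : 0 < lam) (hmu : 0 < mu)
    (k : ℕ) (hk : 1 ≤ k) (t : ℝ) (ht : 0 ≤ t) :
    ∫ τ in (0 : ℝ)..t, hitDens lam mu k τ
      = mu ^ k / (Nat.factorial k : ℝ) *
          (Real.exp (-(lam * (1 - Real.exp (-mu))) * t) * bell k (lam * Real.exp (-mu) * t)
            + ∑ j ∈ Finset.range (k + 1),
                S2 k j * gammaLower ((j : ℝ) + 1) (lam * (1 - Real.exp (-mu)) * t)
                  / (Real.exp mu - 1) ^ j) := by
  obtain ⟨k', rfl⟩ : ∃ k', k = k' + 1 := ⟨k - 1, by omega⟩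
  set k := k' + 1
  set a := lam * (1 - Real.exp (-mu)) with ha
  set b := lam * Real.exp (-mu) with hb
  set E := Real.exp mu - 1 with hEdef
  set C := mu ^ k / (Nat.factorial k : ℝ) with hC
  have hexp1 : (1 : ℝ) < Real.exp mu := by
    rw [← Real.exp_zero]; exact Real.exp_lt_exp.2 hmu
  have hE : (0 : ℝ) < E := by rw [hEdef]; linarith
  have hEne : E ≠ 0 := ne_of_gt hE
  have hbE : b * E = a := by
    rw [hb, hEdef, ha, Real.exp_neg]
    have := Real.exp_ne_zero mu
    field_simp
  set F : ℝ → ℝ := fun s =>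
    C * (Real.exp (-a * s) * ∑ j ∈ Finset.range (k + 1), S2 k j * b ^ j * s ^ j
      + ∑ j ∈ Finset.range (k + 1),
          S2 k j * ((∫ τ in (0 : ℝ)..(a * s), τ ^ j * Real.exp (-τ)) / E ^ j)) with hF
  have hFderiv : ∀ s : ℝ, HasDerivAt F (hitDens lam mu k s) s := by
    intro s
    have hA : HasDerivAt (fun s : ℝ => Real.exp (-a * s)) (-a * Real.exp (-a * s)) s := by
      have h1 : HasDerivAt (fun y : ℝ => -a * y) (-a) s := by
        simpa using (hasDerivAt_id s).const_mul (-a)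
      have h2 : HasDerivAt (fun y : ℝ => Real.exp (-a * y)) (Real.exp (-a * s) * -a) s :=
        HasDerivAt.comp s (Real.hasDerivAt_exp (-a * s)) h1
      convert h2 using 1
      ring
    have hP : HasDerivAt (fun s : ℝ => ∑ j ∈ Finset.range (k + 1), S2 k j * b ^ j * s ^ j)
        (∑ j ∈ Finset.range (k + 1), S2 k j * b ^ j * ((j : ℝ) * s ^ (j - 1))) s :=
      HasDerivAt.fun_sum fun j _ => by
        simpa [mul_assoc] using (hasDerivAt_pow j s).const_mul (S2 k j * b ^ j)
    have hS : HasDerivAt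
        (fun s : ℝ => ∑ j ∈ Finset.range (k + 1),
          S2 k j * ((∫ τ in (0 : ℝ)..(a * s), τ ^ j * Real.exp (-τ)) / E ^ j))
        (∑ j ∈ Finset.range (k + 1),
          S2 k j * (((a * s) ^ j * Real.exp (-(a * s)) * a) / E ^ j)) s := by
      refine HasDerivAt.fun_sum fun j _ => ?_
      have h1 : HasDerivAt (fun s : ℝ => a * s) a s := by
        simpa using (hasDerivAt_id s).const_mul a
      have h2 := (G_hasDeriv j (a * s)).comp s h1
      exact (h2.div_const _).const_mul _
    have htot := ((hA.fun_mul hP).fun_add hS).const_mul C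
    rw [hF]
    refine htot.congr_deriv (Eq.symm ?_)
    rw [hitDens_eq, ← hb, ← ha]
    have hCb : Real.exp (-mu) * mu ^ k / (Nat.factorial k : ℝ) * lam = C * b := by
      rw [hC, hb]; ring
    rw [hCb]
    have hsplit : (-a * Real.exp (-a * s)) * (∑ j ∈ Finset.range (k + 1), S2 k j * b ^ j * s ^ j)
          + Real.exp (-a * s) * (∑ j ∈ Finset.range (k + 1), S2 k j * b ^ j * ((j : ℝ) * s ^ (j - 1)))
          + ∑ j ∈ Finset.range (k + 1), S2 k j * (((a * s) ^ j * Real.exp (-(a * s)) * a) / E ^ j)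
        = ∑ j ∈ Finset.range (k + 1),
            ((-a * Real.exp (-a * s)) * (S2 k j * b ^ j * s ^ j)
              + Real.exp (-a * s) * (S2 k j * b ^ j * ((j : ℝ) * s ^ (j - 1)))
              + S2 k j * (((a * s) ^ j * Real.exp (-(a * s)) * a) / E ^ j)) := by
      rw [Finset.mul_sum, Finset.mul_sum, ← Finset.sum_add_distrib, ← Finset.sum_add_distrib]
    have hterm : ∀ j ∈ Finset.range (k + 1),
        (-a * Real.exp (-a * s)) * (S2 k j * b ^ j * s ^ j)
          + Real.exp (-a * s) * (S2 k j * b ^ j * ((j : ℝ) * s ^ (j - 1)))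
          + S2 k j * (((a * s) ^ j * Real.exp (-(a * s)) * a) / E ^ j)
        = b * Real.exp (-a * s) * (S2 k j * ((j : ℝ) * (b * s) ^ (j - 1))) := by
      intro j _
      rcases j with _ | m
      · simp only [pow_zero, Nat.cast_zero, zero_mul, mul_zero, mul_one, neg_mul]
        ring
      · have hpow : (a * s) ^ (m + 1) / E ^ (m + 1) = b ^ (m + 1) * s ^ (m + 1) := by
          rw [← hbE]
          rw [mul_pow, mul_pow]
          field_simp
        simp only [Nat.add_sub_cancel, neg_mul]
        push_cast
        rw [mul_pow b s m]
        linear_combination (S2 k (m + 1) * Real.exp (-(a * s)) * a) * hpow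
    rw [hsplit, Finset.sum_congr rfl hterm, ← Finset.mul_sum]
    ring
  have hcont : Continuous (hitDens lam mu k) := by
    have heq : hitDens lam mu k = fun τ =>
        Real.exp (-mu) * mu ^ k / (Nat.factorial k : ℝ) * lam *
          Real.exp (-(lam * (1 - Real.exp (-mu))) * τ) *
          ∑ j ∈ Finset.range (k + 1),
            S2 k j * ((j : ℝ) * (lam * Real.exp (-mu) * τ) ^ (j - 1)) :=
      funext (hitDens_eq lam mu k)
    rw [heq]
    fun_prop
  have hint : IntervalIntegrable (hitDens lam mu k) MeasureTheory.volume 0 t :=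
    hcont.intervalIntegrable _ _
  rw [intervalIntegral.integral_eq_sub_of_hasDerivAt (fun τ _ => hFderiv τ) hint]
  have hF0 : F 0 = 0 := by
    have h00 : ∑ j ∈ Finset.range (k + 1), S2 k j * b ^ j * (0 : ℝ) ^ j = 0 := by
      rw [Finset.sum_eq_single 0]
      · simp [k, S2_succ_zero]
      · intro j _ hj
        simp [zero_pow hj]
      · intro h
        simp at h
    rw [hF]
    simp [h00]
  rw [hF0, sub_zero]
  simp only [hF]
  rw [bell_eq]
  congr 1
  congr 1
  · congr 1
    exact Finset.sum_congr rfl fun j _ => by rw [mul_pow]; ring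
  · refine Finset.sum_congr rfl fun j _ => ?_
    rw [gammaLower_nat]
    ring
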